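/- Let P = ℤ[ω₁,…,ω₈,y₃,y₄,y₅,y₆,y₉,y₁₀,y₁₅] and let α₄, α₆, α₇, β be arbitrary elements of the ideal ⟨ω₁,…,ω₈⟩ ⊂ P. Set λ₄ = 5y₆ + α₄, λ₆ = 3y₁₀ + α₆, λ₇ = 2y₁₅ + α₇, φ = 2y₆⁵ − y₁₀³ + y₁₅² + β, and define μ₄ = −12φ + 5y₆⁴λ₄ − 4y₁₀²λ₆ + 6y₁₅λ₇, μ₆ = −10φ + 4y₆⁴λ₄ − 3y₁₀²λ₆ + 5y₁₅λ₇, μ₇ = 15φ − 6y₆⁴λ₄ + 5y₁₀²λ₆ − 7y₁₅λ₇. Then: (i) μ₄ = y₆⁵ + 5y₆⁴α₄ − 4y₁₀²α₆ + 6y₁₅α₇ − 12β, μ₆ = y₁₀³ + 4y₆⁴α₄ − 3y₁₀²α₆ + 5y₁₅α₇ − 10β, μ₇ = y₁₅² − 6y₆⁴α₄ + 5y₁₀²α₆ − 7y₁₅α₇ + 15β; (ii) φ = 2μ₄ − μ₆ + μ₇; and consequently (iii) for any ideal I of P containing λ₄, λ₆, λ₇, one has I + ⟨φ⟩ = I +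 ⟨μ₄, μ₆, μ₇⟩. -/
import Mathlib


open MvPolynomial

noncomputable section

/-- P = ℤ[ω₁,…,ω₈,y₃,y₄,y₅,y₆,y₉,y₁₀,y₁₅]: ωᵢ = X (i−1) for 1 ≤ i ≤ 8,
    y₃ = X 8, y₄ = X 9, y₅ = X 10, y₆ = X 11, y₉ = X 12, y₁₀ = X 13, y₁₅ = X 14. -/
abbrev E8P : Type := MvPolynomial (Fin 15) ℤ

/-- The ideal ⟨ω₁,…,ω₈⟩ ⊂ P. -/
def E8omegaIdeal : Ideal E8P :=
  Ideal.span (X '' {i : Fin 15 | (i : ℕ) < 8})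

def lam4 (a4 : E8P) : E8P := 5 * X 11 + a4
def lam6 (a6 : E8P) : E8P := 3 * X 13 + a6
def lam7 (a7 : E8P) : E8P := 2 * X 14 + a7
def phiE8 (b : E8P) : E8P := 2 * X 11 ^ 5 - X 13 ^ 3 + X 14 ^ 2 + b

def mu4 (a4 a6 a7 b : E8P) : E8P :=
  -12 * phiE8 b + 5 * X 11 ^ 4 * lam4 a4 - 4 * X 13 ^ 2 * lam6 a6 + 6 * X 14 * lam7 a7
def mu6 (a4 a6 a7 b : E8P) : E8P :=
  -10 * phiE8 b + 4 * X 11 ^ 4 * lam4 a4 - 3 * X 13 ^ 2 * lam6 a6 + 5 * X 14 * lam7 a7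
def mu7 (a4 a6 a7 b : E8P) : E8P :=
  15 * phiE8 b - 6 * X 11 ^ 4 * lam4 a4 + 5 * X 13 ^ 2 * lam6 a6 - 7 * X 14 * lam7 a7

/-- The construction (5.3)–(5.5) for G = E₈: explicit forms of μ₄, μ₆, μ₇,
    recovery of φ from them, and the resulting equality of ideals. -/
theorem E8_missing_relations (a4 a6 a7 b : E8P)
    (ha4 : a4 ∈ E8omegaIdeal) (ha6 : a6 ∈ E8omegaIdeal)
    (ha7 : a7 ∈ E8omegaIdeal) (hb : b ∈ E8omegaIdeal) :
    (mu4 a4 a6 a7 b =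
        X 11 ^ 5 + 5 * X 11 ^ 4 * a4 - 4 * X 13 ^ 2 * a6 + 6 * X 14 * a7 - 12 * b ∧
      mu6 a4 a6 a7 b =
        X 13 ^ 3 + 4 * X 11 ^ 4 * a4 - 3 * X 13 ^ 2 * a6 + 5 * X 14 * a7 - 10 * b ∧
      mu7 a4 a6 a7 b =
        X 14 ^ 2 - 6 * X 11 ^ 4 * a4 + 5 * X 13 ^ 2 * a6 - 7 * X 14 * a7 + 15 * b) ∧
    phiE8 b = 2 * mu4 a4 a6 a7 b - mu6 a4 a6 a7 b + mu7 a4 a6 a7 b ∧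
    ∀ I : Ideal E8P, lam4 a4 ∈ I → lam6 a6 ∈ I → lam7 a7 ∈ I →
      I ⊔ Ideal.span {phiE8 b} =
        I ⊔ Ideal.span {mu4 a4 a6 a7 b, mu6 a4 a6 a7 b, mu7 a4 a6 a7 b} := by
  refine ⟨⟨by unfold mu4 phiE8 lam4 lam6 lam7; ring,
            by unfold mu6 phiE8 lam4 lam6 lam7; ring,
            by unfold mu7 phiE8 lam4 lam6 lam7; ring⟩,
         by unfold mu4 mu6 mu7; ring, ?_⟩
  intro I h4 h6 h7
  apply le_antisymm
  · apply sup_le le_sup_left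
    rw [Ideal.span_le]
    intro x hx
    simp only [Set.mem_singleton_iff] at hx
    subst hx
    have : phiE8 b = 2 * mu4 a4 a6 a7 b - mu6 a4 a6 a7 b + mu7 a4 a6 a7 b := by
      unfold mu4 mu6 mu7; ring
    rw [this]
    have hm4 : mu4 a4 a6 a7 b ∈ I ⊔ Ideal.span {mu4 a4 a6 a7 b, mu6 a4 a6 a7 b, mu7 a4 a6 a7 b} :=
      Ideal.mem_sup_right (Ideal.subset_span (by simp))
    have hm6 : mu6 a4 a6 a7 b ∈ I ⊔ Ideal.span {mu4 a4 a6 a7 b, mu6 a4 a6 a7 b, mu7 a4 a6 a7 b} :=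
      Ideal.mem_sup_right (Ideal.subset_span (by simp))
    have hm7 : mu7 a4 a6 a7 b ∈ I ⊔ Ideal.span {mu4 a4 a6 a7 b, mu6 a4 a6 a7 b, mu7 a4 a6 a7 b} :=
      Ideal.mem_sup_right (Ideal.subset_span (by simp))
    exact add_mem (sub_mem (Ideal.mul_mem_left _ _ hm4) hm6) hm7
  · apply sup_le le_sup_left
    rw [Ideal.span_le]
    have hI : I ≤ I ⊔ Ideal.span {phiE8 b} := le_sup_left
    have hphi : phiE8 b ∈ I ⊔ Ideal.span {phiE8 b} :=
      Ideal.mem_sup_right (Ideal.subset_span rfl)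
    intro x hx
    simp only [Set.mem_insert_iff, Set.mem_singleton_iff] at hx
    rcases hx with h | h | h <;> subst h
    · exact add_mem (sub_mem (add_mem (Ideal.mul_mem_left _ _ hphi)
        (Ideal.mul_mem_left _ _ (hI h4))) (Ideal.mul_mem_left _ _ (hI h6)))
        (Ideal.mul_mem_left _ _ (hI h7))
    · exact add_mem (sub_mem (add_mem (Ideal.mul_mem_left _ _ hphi)
        (Ideal.mul_mem_left _ _ (hI h4))) (Ideal.mul_mem_left _ _ (hI h6)))
        (Ideal.mul_mem_left _ _ (hI h7))
    · exact sub_mem (add_mem (sub_mem (Ideal.mul_mem_left _ _ hphi)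
        (Ideal.mul_mem_left _ _ (hI h4))) (Ideal.mul_mem_left _ _ (hI h6)))
        (Ideal.mul_mem_left _ _ (hI h7))
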